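/- For every pair (M, E) of positive reals there exists α > 0 and β ∈ ℝ such that the generalized Bose-Einstein measure ρ(ε) f_∞(ε) dε = ρ(ε)/(e^{αε+β₊} − 1) dε + |β₋| δ₀, with ρ(ε) = ε²/2, β₊ = max(β,0), β₋ = min(β,0), has total mass M and total energy E, i.e. ∫₀^∞ ρ(ε)/(e^{αε+β₊}−1) dε + |β₋| = M and ∫₀^∞ ε ρ(ε)/(e^{αε+β₊}−1) dε = E. -/

import Mathlib

open MeasureTheory Real Set


lemma integ_pow_exp_gen (n : ℕ) {b : ℝ} (hb : 0 < b) :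
    IntegrableOn (fun x : ℝ => x ^ n * Real.exp (-(b*x))) (Ioi 0) := by
  have h := integrableOn_rpow_mul_exp_neg_mul_rpow (p := 1) (s := (n:ℝ)) (b := b)
    (lt_of_lt_of_le (by norm_num) (Nat.cast_nonneg n)) one_pos hb
  refine (h.congr_fun (fun x hx => ?_) measurableSet_Ioi)
  dsimp only; rw [rpow_one, rpow_natCast, neg_mul]

lemma integ_pow_exp (n : ℕ) : IntegrableOn (fun x : ℝ => x ^ n * Real.exp (-(x/2))) (Ioi 0) := by
  refine (integ_pow_exp_gen n (b := 1/2) (by norm_num)).congr_fun (fun x hx => ?_) measurableSet_Ioi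
  ring_nf

lemma denom_pos {c ε : ℝ} (hc : 0 ≤ c) (hε : 0 < ε) : 0 < Real.exp (ε + c) - 1 := by
  have : (1:ℝ) = Real.exp 0 := (Real.exp_zero).symm
  rw [this, sub_pos]
  exact Real.exp_lt_exp.mpr (by linarith)

lemma exp_sub_one_ge {x : ℝ} (hx : 0 ≤ x) : (x/2) * Real.exp (x/2) ≤ Real.exp x - 1 := by
  have h1 : x/2 + 1 ≤ Real.exp (x/2) := Real.add_one_le_exp _
  have h2 : (0:ℝ) < Real.exp (x/2) := Real.exp_pos _
  have h3 : Real.exp x = Real.exp (x/2) * Real.exp (x/2) := by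
    rw [← Real.exp_add]; ring_nf
  nlinarith

lemma point_bound {c ε : ℝ} (hc : 0 ≤ c) (hε : 0 < ε) (k : ℕ) :
    ε ^ (k+1) / 2 / (Real.exp (ε + c) - 1) ≤ ε ^ k * Real.exp (-(ε/2)) := by
  have hd := denom_pos hc hε
  rw [div_div, div_le_iff₀ (by positivity)]
  have h1 : (ε/2) * Real.exp (ε/2) ≤ Real.exp ε - 1 := exp_sub_one_ge hε.le
  have h2 : Real.exp ε - 1 ≤ Real.exp (ε + c) - 1 := by
    have := Real.exp_le_exp.mpr (show ε ≤ ε + c by linarith)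
    linarith
  have h3 : Real.exp (-(ε/2)) * Real.exp (ε/2) = 1 := by
    rw [← Real.exp_add]; simp
  have hk : 0 ≤ ε ^ k := by positivity
  have he : 0 < Real.exp (-(ε/2)) := Real.exp_pos _
  calc ε ^ (k+1) = (ε ^ k * Real.exp (-(ε/2))) * ((ε) * Real.exp (ε/2)) := by
        rw [pow_succ]
        have : ε ^ k * Real.exp (-(ε/2)) * (ε * Real.exp (ε/2))
            = ε ^ k * ε * (Real.exp (-(ε/2)) * Real.exp (ε/2)) := by ring
        rw [this, h3, mul_one]
    _ ≤ (ε ^ k * Real.exp (-(ε/2))) * (2 * (Real.exp (ε + c) - 1)) := by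
        apply mul_le_mul_of_nonneg_left _ (by positivity)
        nlinarith
    _ = ε ^ k * Real.exp (-(ε/2)) * (2 * (Real.exp (ε+c) - 1)) := rfl

lemma bose_contOn {c : ℝ} (hc : 0 ≤ c) (k : ℕ) :
    ContinuousOn (fun ε : ℝ => ε ^ (k+1) / 2 / (Real.exp (ε + c) - 1)) (Ioi 0) := by
  apply ContinuousOn.div (by fun_prop) (by fun_prop)
  intro ε hε; exact (denom_pos hc hε).ne'

lemma bose_nonneg {c ε : ℝ} (hc : 0 ≤ c) (hε : 0 < ε) (k : ℕ) :
    0 ≤ ε ^ (k+1) / 2 / (Real.exp (ε + c) - 1) := by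
  have := denom_pos hc hε; positivity

lemma bose_integrable {c : ℝ} (hc : 0 ≤ c) (k : ℕ) :
    IntegrableOn (fun ε : ℝ => ε ^ (k+1) / 2 / (Real.exp (ε + c) - 1)) (Ioi 0) := by
  refine Integrable.mono' (integ_pow_exp k) ((bose_contOn hc k).aestronglyMeasurable measurableSet_Ioi) ?_
  filter_upwards [ae_restrict_mem measurableSet_Ioi] with ε hε
  rw [Real.norm_eq_abs, abs_of_nonneg (bose_nonneg hc hε k)]
  exact point_bound hc hε k

noncomputable def bose (k : ℕ) (b : ℝ) : ℝ :=
  ∫ ε in Ioi (0:ℝ), ε ^ (k+1) / 2 / (Real.exp (ε + max b 0) - 1)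

lemma bose_continuous (k : ℕ) : Continuous (bose k) := by
  apply continuous_of_dominated (bound := fun ε => ε ^ k * Real.exp (-(ε/2)))
  · intro b
    exact ((bose_contOn (le_max_right b 0) k).aestronglyMeasurable measurableSet_Ioi)
  · intro b
    filter_upwards [ae_restrict_mem measurableSet_Ioi] with ε hε
    rw [Real.norm_eq_abs, abs_of_nonneg (bose_nonneg (le_max_right b 0) hε k)]
    exact point_bound (le_max_right b 0) hε k
  · exact integ_pow_exp k
  · filter_upwards [ae_restrict_mem measurableSet_Ioi] with ε hε
    apply Continuous.div (by fun_prop) (by fun_prop)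
    intro b
    exact (denom_pos (le_max_right b 0) hε).ne'

lemma bose_pos (k : ℕ) (b : ℝ) : 0 < bose k b := by
  rw [bose, setIntegral_pos_iff_support_of_nonneg_ae]
  · have hsub : Ioi (0:ℝ) ⊆ Function.support fun ε => ε ^ (k+1) / 2 / (Real.exp (ε + max b 0) - 1) := by
      intro ε hε
      have h1 : (0:ℝ) < ε := hε
      have h2 := denom_pos (le_max_right b 0) h1
      simp only [Function.mem_support]
      positivity
    have hv : (0:ENNReal) < volume (Ioi (0:ℝ)) := by simp
    exact lt_of_lt_of_le hv (measure_mono (fun x hx => ⟨hsub hx, hx⟩))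
  · filter_upwards [ae_restrict_mem measurableSet_Ioi] with ε hε
    exact bose_nonneg (le_max_right b 0) hε k
  · exact bose_integrable (le_max_right b 0) k

lemma bose_zero (k : ℕ) : bose k 0 = ∫ ε in Ioi (0:ℝ), ε ^ (k+1) / 2 / (Real.exp ε - 1) := by
  rw [bose]
  congr 1; funext ε; rw [max_self, add_zero]

lemma bose_upper (k : ℕ) (b : ℝ) : bose k b ≤ Real.exp (-(max b 0)) * bose k 0 := by
  rw [bose, bose_zero, ← integral_const_mul]
  have hint0 : IntegrableOn (fun ε : ℝ => ε ^ (k+1) / 2 / (Real.exp ε - 1)) (Ioi 0) := by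
    refine (bose_integrable le_rfl k).congr_fun (fun ε hε => ?_) measurableSet_Ioi
    dsimp only; rw [add_zero]
  apply setIntegral_mono_on (bose_integrable (le_max_right b 0) k)
    (hint0.const_mul _) measurableSet_Ioi
  intro ε hε
  have h1 : (0:ℝ) < ε := hε
  have hc : (0:ℝ) ≤ max b 0 := le_max_right b 0
  have hd0 : 0 < Real.exp ε - 1 := by
    have := denom_pos (le_refl (0:ℝ)) h1; rwa [add_zero] at this
  have hdc : 0 < Real.exp (ε + max b 0) - 1 := denom_pos hc h1
  have key : Real.exp ε - 1 ≤ Real.exp (-(max b 0)) * (Real.exp (ε + max b 0) - 1) := by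
    have e1 : Real.exp (ε + max b 0) = Real.exp ε * Real.exp (max b 0) := Real.exp_add _ _
    have e2 : Real.exp (-(max b 0)) * Real.exp (max b 0) = 1 := by
      rw [← Real.exp_add]; simp
    have e3 : Real.exp (-(max b 0)) ≤ 1 := Real.exp_le_one_iff.mpr (by linarith)
    have e4 : 0 < Real.exp (max b 0) := Real.exp_pos _
    nlinarith [Real.exp_pos ε]
  have hA : (0:ℝ) ≤ ε ^ (k+1) / 2 := by positivity
  have hrw : Real.exp (-(max b 0)) * (ε ^ (k+1) / 2 / (Real.exp ε - 1))
      = (Real.exp (-(max b 0)) * (ε ^ (k+1) / 2)) / (Real.exp ε - 1) := by ring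
  rw [hrw, div_le_div_iff₀ hdc hd0]
  nlinarith [mul_le_mul_of_nonneg_left key hA]

lemma bose_lower (k : ℕ) (b : ℝ) :
    Real.exp (-(max b 0)) * (∫ ε in Ioi (0:ℝ), ε ^ (k+1) / 2 * Real.exp (-ε)) ≤ bose k b := by
  rw [bose, ← integral_const_mul]
  have hintexp : IntegrableOn (fun ε : ℝ => ε ^ (k+1) / 2 * Real.exp (-ε)) (Ioi 0) := by
    refine IntegrableOn.congr_fun ((integ_pow_exp_gen (k+1) (b := 1) one_pos).div_const 2)
      (fun ε hε => ?_) measurableSet_Ioi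
    rw [one_mul]; ring
  apply setIntegral_mono_on (hintexp.const_mul _)
    (bose_integrable (le_max_right b 0) k) measurableSet_Ioi
  intro ε hε
  have h1 : (0:ℝ) < ε := hε
  have hc : (0:ℝ) ≤ max b 0 := le_max_right b 0
  have hdc : 0 < Real.exp (ε + max b 0) - 1 := denom_pos hc h1
  have key : Real.exp (-(max b 0)) * Real.exp (-ε) * (Real.exp (ε + max b 0) - 1) ≤ 1 := by
    have e1 : Real.exp (-(max b 0)) * Real.exp (-ε) * Real.exp (ε + max b 0) = 1 := by
      rw [← Real.exp_add, ← Real.exp_add,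
        show -(max b 0) + -ε + (ε + max b 0) = 0 by ring, Real.exp_zero]
    nlinarith [Real.exp_pos (-(max b 0)), Real.exp_pos (-ε)]
  rw [le_div_iff₀ hdc]
  have hnum : (0:ℝ) ≤ ε ^ (k+1) / 2 := by positivity
  nlinarith [mul_le_mul_of_nonneg_left key hnum]

lemma exp_int_pos (k : ℕ) : 0 < ∫ ε in Ioi (0:ℝ), ε ^ (k+1) / 2 * Real.exp (-ε) := by
  rw [setIntegral_pos_iff_support_of_nonneg_ae]
  · have hsub : Ioi (0:ℝ) ⊆ Function.support fun ε : ℝ => ε ^ (k+1) / 2 * Real.exp (-ε) := by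
      intro ε hε
      have h1 : (0:ℝ) < ε := hε
      simp only [Function.mem_support]
      positivity
    have hv : (0:ENNReal) < volume (Ioi (0:ℝ)) := by simp
    exact lt_of_lt_of_le hv (measure_mono (fun x hx => ⟨hsub hx, hx⟩))
  · filter_upwards [ae_restrict_mem measurableSet_Ioi] with ε hε
    have h1 : (0:ℝ) < ε := hε
    positivity
  · refine IntegrableOn.congr_fun ((integ_pow_exp_gen (k+1) (b := 1) one_pos).div_const 2)
      (fun ε hε => ?_) measurableSet_Ioi
    rw [one_mul]; ring

lemma bose_scale (k : ℕ) {α : ℝ} (hα : 0 < α) (c : ℝ) :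
    (∫ ε in Ioi (0:ℝ), ε ^ (k+1) / 2 / (Real.exp (α * ε + c) - 1))
      = (α⁻¹) ^ (k+2) * ∫ u in Ioi (0:ℝ), u ^ (k+1) / 2 / (Real.exp (u + c) - 1) := by
  have h := integral_comp_mul_left_Ioi (fun u : ℝ => u ^ (k+1) / 2 / (Real.exp (u + c) - 1)) 0 hα
  rw [mul_zero] at h
  have heq : (fun ε : ℝ => ε ^ (k+1) / 2 / (Real.exp (α * ε + c) - 1))
      = fun ε : ℝ => (α⁻¹) ^ (k+1) * ((α * ε) ^ (k+1) / 2 / (Real.exp (α * ε + c) - 1)) := by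
    funext ε
    rw [mul_pow]
    field_simp
    rw [mul_assoc, ← mul_pow, one_div, inv_mul_cancel₀ hα.ne', one_pow, mul_one]
  rw [heq, integral_const_mul, h]
  simp only [smul_eq_mul]
  ring

lemma bose_eq (k : ℕ) {b : ℝ} (hb : 0 ≤ b) :
    bose k b = ∫ u in Ioi (0:ℝ), u ^ (k+1) / 2 / (Real.exp (u + b) - 1) := by
  rw [bose, max_eq_left hb]

lemma mass_scale {α : ℝ} (hα : 0 < α) {b : ℝ} (hb : 0 ≤ b) :
    (∫ ε in Ioi (0:ℝ), ε ^ 2 / 2 / (Real.exp (α * ε + b) - 1)) = (α⁻¹) ^ 3 * bose 1 b := by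
  rw [bose_eq 1 hb]
  exact bose_scale 1 hα b

lemma energy_scale {α : ℝ} (hα : 0 < α) {b : ℝ} (hb : 0 ≤ b) :
    (∫ ε in Ioi (0:ℝ), ε * (ε ^ 2 / 2) / (Real.exp (α * ε + b) - 1)) = (α⁻¹) ^ 4 * bose 2 b := by
  rw [bose_eq 2 hb]
  have h : (∫ ε in Ioi (0:ℝ), ε * (ε ^ 2 / 2) / (Real.exp (α * ε + b) - 1))
      = ∫ ε in Ioi (0:ℝ), ε ^ 3 / 2 / (Real.exp (α * ε + b) - 1) := by
    congr 1; funext ε; ring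
  rw [h]
  exact bose_scale 2 hα b

-- rpow cube root
lemma cube_root_pow {x : ℝ} (hx : 0 < x) : (x ^ ((1:ℝ)/3)) ^ 3 = x := by
  rw [← Real.rpow_natCast (x ^ ((1:ℝ)/3)) 3, ← Real.rpow_mul hx.le]
  norm_num

lemma fourth_root_pow {x : ℝ} (hx : 0 < x) : (x ^ ((1:ℝ)/4)) ^ 4 = x := by
  rw [← Real.rpow_natCast (x ^ ((1:ℝ)/4)) 4, ← Real.rpow_mul hx.le]
  norm_num

theorem generalized_BE_equilibrium (M E : ℝ) (hM : 0 < M) (hE : 0 < E) :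
    ∃ α β : ℝ, 0 < α ∧
      (∫ ε in Set.Ioi (0 : ℝ), ε ^ 2 / 2 / (Real.exp (α * ε + max β 0) - 1)) +
          |min β 0| = M ∧
      (∫ ε in Set.Ioi (0 : ℝ), ε * (ε ^ 2 / 2) / (Real.exp (α * ε + max β 0) - 1)) =
        E := by
  have hm0 : 0 < bose 1 0 := bose_pos 1 0
  have he0 : 0 < bose 2 0 := bose_pos 2 0
  set m0 := bose 1 0 with hm0def
  set e0 := bose 2 0 with he0def
  rcases le_or_gt (m0 ^ 4 * E ^ 3) (e0 ^ 3 * M ^ 4) with hcase | hcase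
  · -- condensed case
    set α := (e0 / E) ^ ((1:ℝ)/4) with hαdef
    have hα : 0 < α := Real.rpow_pos_of_pos (by positivity) _
    have hα4 : α ^ 4 = e0 / E := fourth_root_pow (by positivity)
    set β := α⁻¹ ^ 3 * m0 - M with hβdef
    have hβ : β ≤ 0 := by
      have h12 : (α⁻¹ ^ 3 * m0) ^ 4 ≤ M ^ 4 := by
        have hai : α⁻¹ ^ 3 = (α ^ 3)⁻¹ := by rw [inv_pow]
        have h1 : (α⁻¹ ^ 3 * m0) ^ 4 = (E / e0) ^ 3 * m0 ^ 4 := by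
          calc (α⁻¹ ^ 3 * m0) ^ 4 = ((α ^ 4)⁻¹) ^ 3 * m0 ^ 4 := by ring
            _ = ((e0 / E)⁻¹) ^ 3 * m0 ^ 4 := by rw [hα4]
            _ = (E / e0) ^ 3 * m0 ^ 4 := by rw [inv_div]
        rw [h1, div_pow]
        rw [div_mul_eq_mul_div, div_le_iff₀ (by positivity)]
        calc E ^ 3 * m0 ^ 4 = m0 ^ 4 * E ^ 3 := by ring
          _ ≤ e0 ^ 3 * M ^ 4 := hcase
          _ = M ^ 4 * e0 ^ 3 := by ring
      have h2 : α⁻¹ ^ 3 * m0 ≤ M :=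
        (pow_le_pow_iff_left₀ (a := α⁻¹ ^ 3 * m0) (b := M) (n := 4) (by positivity) hM.le
          (by norm_num)).mp h12
      rw [hβdef, sub_nonpos]; exact h2
    have hmax : max β 0 = 0 := max_eq_right hβ
    have hmin : min β 0 = β := min_eq_left hβ
    refine ⟨α, β, hα, ?_, ?_⟩
    · rw [hmax, hmin, abs_of_nonpos hβ, mass_scale hα le_rfl]
      have : bose 1 0 = m0 := rfl
      rw [this, hβdef]; ring
    · rw [hmax, energy_scale hα le_rfl]
      have : bose 2 0 = e0 := rfl
      rw [this]
      have hα4' : α ^ 4 * E = e0 := by rw [hα4]; field_simp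
      have : α⁻¹ ^ 4 = (α ^ 4)⁻¹ := by rw [inv_pow]
      rw [this, ← hα4']
      field_simp
  · -- non-condensed case
    set H := fun b => (bose 1 b) ^ 4 * E ^ 3 - (bose 2 b) ^ 3 * M ^ 4 with hHdef
    have contH : Continuous H := by
      apply Continuous.sub
      · exact (((bose_continuous 1).pow 4).mul continuous_const)
      · exact (((bose_continuous 2).pow 3).mul continuous_const)
    have H0pos : 0 < H 0 := by
      simp only [hHdef]
      have : bose 1 0 = m0 := rfl
      have : bose 2 0 = e0 := rfl
      simp only [hm0def, he0def] at hcase ⊢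
      linarith
    set c0 := ∫ ε in Ioi (0:ℝ), ε ^ (2+1) / 2 * Real.exp (-ε) with hc0def
    have hc0 : 0 < c0 := exp_int_pos 2
    set K := m0 ^ 4 * E ^ 3 with hKdef
    set L := c0 ^ 3 * M ^ 4 with hLdef
    have hK : 0 < K := by positivity
    have hL : 0 < L := by positivity
    set b1 := max (Real.log (K / L) + 1) 1 with hb1def
    have hb1 : (0:ℝ) < b1 := lt_of_lt_of_le one_pos (le_max_right _ _)
    have hmaxb1 : max b1 0 = b1 := max_eq_left hb1.le
    have hqK : Real.exp (-b1) * K < L := by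
      have h1 : Real.exp (-b1) ≤ Real.exp (-(Real.log (K / L) + 1)) := by
        apply Real.exp_le_exp.mpr
        simp only [neg_le_neg_iff, hb1def]
        exact le_max_left _ _
      have h2 : Real.exp (-(Real.log (K / L) + 1)) = (L / K) * Real.exp (-1) := by
        rw [show -(Real.log (K/L) + 1) = -Real.log (K/L) + -1 by ring, Real.exp_add,
          ← Real.log_inv, Real.exp_log (by positivity), inv_div]
      have h3 : Real.exp (-1) < 1 := Real.exp_lt_one_iff.mpr (by norm_num)
      have h4 : Real.exp (-b1) < L / K := by
        calc Real.exp (-b1) ≤ (L/K) * Real.exp (-1) := h1.trans_eq h2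
          _ < (L/K) * 1 := by
              apply mul_lt_mul_of_pos_left h3 (by positivity)
          _ = L / K := mul_one _
      calc Real.exp (-b1) * K < (L / K) * K := by
            apply mul_lt_mul_of_pos_right h4 hK
        _ = L := by field_simp
    have Hb1neg : H b1 < 0 := by
      have hub := bose_upper 1 b1
      have hlb := bose_lower 2 b1
      rw [hmaxb1] at hub hlb
      set q := Real.exp (-b1) with hqdef
      have hq : 0 < q := Real.exp_pos _
      have h1 : (bose 1 b1) ^ 4 ≤ (q * m0) ^ 4 := by
        apply pow_le_pow_left₀ (bose_pos 1 b1).le hub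
      have h2 : (q * c0) ^ 3 ≤ (bose 2 b1) ^ 3 := by
        apply pow_le_pow_left₀ (by positivity) hlb
      have h3 : H b1 ≤ (q * m0) ^ 4 * E ^ 3 - (q * c0) ^ 3 * M ^ 4 := by
        simp only [hHdef]
        have hE3 : (0:ℝ) < E ^ 3 := by positivity
        have hM4 : (0:ℝ) < M ^ 4 := by positivity
        nlinarith
      have h4 : (q * m0) ^ 4 * E ^ 3 - (q * c0) ^ 3 * M ^ 4 = q ^ 3 * (q * K - L) := by
        simp only [hKdef, hLdef]; ring
      have h5 : q * K - L < 0 := by linarith [hqK]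
      have h6 : q ^ 3 * (q * K - L) < 0 := mul_neg_of_pos_of_neg (by positivity) h5
      linarith
    -- IVT
    have hmem : (0:ℝ) ∈ Icc (H b1) (H 0) := ⟨Hb1neg.le, H0pos.le⟩
    obtain ⟨b, hbmem, hHb⟩ := intermediate_value_Icc' hb1.le contH.continuousOn hmem
    have hb0 : 0 ≤ b := hbmem.1
    have hmaxb : max b 0 = b := max_eq_left hb0
    have hminb : min b 0 = 0 := min_eq_right hb0
    set m := bose 1 b with hmdef
    set e := bose 2 b with hedef
    have hm : 0 < m := bose_pos 1 b
    have he : 0 < e := bose_pos 2 b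
    have hrel : m ^ 4 * E ^ 3 = e ^ 3 * M ^ 4 := by
      have : H b = 0 := hHb
      simp only [hHdef] at this
      linarith
    set α := (m / M) ^ ((1:ℝ)/3) with hαdef
    have hα : 0 < α := Real.rpow_pos_of_pos (by positivity) _
    have hα3 : α ^ 3 = m / M := cube_root_pow (by positivity)
    have hα4 : α ^ 4 = e / E := by
      have h1 : (α ^ 4) ^ 3 = (e / E) ^ 3 := by
        rw [← pow_mul, show 4 * 3 = 3 * 4 by ring, pow_mul, hα3]
        rw [div_pow, div_pow]
        rw [div_eq_div_iff (by positivity) (by positivity)]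
        linear_combination hrel
      have ha4 : 0 < α ^ 4 := by positivity
      have heE : (0:ℝ) < e / E := by positivity
      rcases lt_trichotomy (α ^ 4) (e / E) with h | h | h
      · exfalso
        have := pow_lt_pow_left₀ h ha4.le (n := 3) (by norm_num)
        exact absurd h1 (ne_of_lt this)
      · exact h
      · exfalso
        have := pow_lt_pow_left₀ h heE.le (n := 3) (by norm_num)
        exact absurd h1.symm (ne_of_lt this)
    refine ⟨α, b, hα, ?_, ?_⟩
    · rw [hmaxb, hminb, abs_zero, add_zero, mass_scale hα hb0, ← hmdef]
      rw [inv_pow, hα3]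
      field_simp
    · rw [hmaxb, energy_scale hα hb0, ← hedef]
      rw [inv_pow, hα4]
      field_simp
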